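/- For every integer vector v = (v_1, ..., v_n) ∈ ℤ_{>0}^n with gcd(v_1, ..., v_n) = 1, there exist integer vectors u_1, ..., u_n ∈ ℤ^{n-1} in linear general position such that |det(U \ {u_i})| = v_i for every i. -/

import Mathlib

open Matrix

lemma fin_succ_succ_ne_one {n : ℕ} (i : Fin n) : i.succ.succ ≠ (1 : Fin (n + 2)) := by
  rw [← Fin.succ_zero_eq_one, ne_eq, Fin.succ_inj]
  exact Fin.succ_ne_zero i

lemma fin_one_ne_succ_succ {n : ℕ} (i : Fin n) : (1 : Fin (n + 2)) ≠ i.succ.succ :=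
  (fin_succ_succ_ne_one i).symm

/-- Any integer vector can be carried to a multiple of the first standard basis
vector by a unimodular integer matrix. -/
lemma exists_unimodular_reduce :
    ∀ (n : ℕ) (w : Fin (n + 1) → ℤ),
      ∃ (B : Matrix (Fin (n + 1)) (Fin (n + 1)) ℤ) (c : ℤ),
        IsUnit B.det ∧ B.mulVec w = Pi.single 0 c := by
  intro n
  induction n with
  | zero =>
    intro w
    refine ⟨1, w 0, by simp, ?_⟩
    rw [Matrix.one_mulVec]
    funext i
    have hi : i = 0 := Fin.eq_zero i
    subst hi; simp
  | succ n ih =>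
    intro w
    obtain ⟨B', c', hB', hred⟩ := ih (Fin.tail w)
    set M : Matrix (Fin (n + 2)) (Fin (n + 2)) ℤ :=
      Matrix.of fun i j =>
        Fin.cases (Fin.cases 1 (fun _ => 0) j)
          (fun i' => Fin.cases 0 (fun j' => B' i' j') j) i with hMdef
    have hM00 : M 0 0 = 1 := rfl
    have hM0succ : ∀ j : Fin (n + 1), M 0 j.succ = 0 := fun j => rfl
    have hMsucc0 : ∀ i : Fin (n + 1), M i.succ 0 = 0 := fun i => rfl
    have hMsuccsucc : ∀ (i j : Fin (n + 1)), M i.succ j.succ = B' i j := fun i j => rfl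
    have hMdet : M.det = B'.det := by
      rw [Matrix.det_succ_row_zero, Fin.sum_univ_succ]
      simp only [hM0succ, mul_zero, zero_mul, Finset.sum_const_zero, add_zero]
      have h2 : M.submatrix Fin.succ ((0 : Fin (n+2)).succAbove) = B' := by
        ext i j
        rw [Matrix.submatrix_apply, Fin.succAbove_zero]
        exact hMsuccsucc i j
      rw [h2, hM00]
      simp
    have hMvec : M.mulVec w
        = fun j => if j = 0 then w 0 else if j = (0 : Fin (n+1)).succ then c' else 0 := by
      funext i
      induction i using Fin.cases with
      | zero =>
        simp only [Matrix.mulVec, dotProduct, Fin.sum_univ_succ, if_pos rfl]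
        have h01 : M 0 1 = 0 := by rw [← Fin.succ_zero_eq_one]; exact hM0succ 0
        simp [hM0succ, hM00, h01]
      | succ i' =>
        have : (M.mulVec w) i'.succ = (B'.mulVec (Fin.tail w)) i' := by
          simp [Matrix.mulVec, dotProduct, Fin.sum_univ_succ, hMsucc0, hMsuccsucc, Fin.tail]
        rw [this, hred]
        induction i' using Fin.cases with
        | zero => simp [Fin.succ_ne_zero]
        | succ i'' =>
          simp [Pi.single_apply, Fin.succ_ne_zero, Fin.succ_zero_eq_one, fin_succ_succ_ne_one]
    by_cases hc' : c' = 0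
    · refine ⟨M, w 0, hMdet ▸ hB', ?_⟩
      rw [hMvec]
      funext j
      subst hc'
      rw [Pi.single_apply]
      split <;> simp <;> exact ite_self _
    · set w0 := w 0 with hw0
      set G : ℤ := (Int.gcd w0 c' : ℤ) with hGdef
      have hG : G ≠ 0 := by
        simp only [hGdef, ne_eq, Int.natCast_eq_zero, Int.gcd_eq_zero_iff, not_and]
        intro _; exact hc'
      set a := Int.gcdA w0 c' with ha
      set b := Int.gcdB w0 c' with hb
      have hbez : G = w0 * a + c' * b := Int.gcd_eq_gcd_ab w0 c'
      have hdvd0 : G ∣ w0 := Int.gcd_dvd_left w0 c'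
      have hdvd1 : G ∣ c' := Int.gcd_dvd_right w0 c'
      set p := w0 / G with hpdef
      set q := c' / G with hqdef
      have hp : G * p = w0 := Int.mul_ediv_cancel' hdvd0
      have hq : G * q = c' := Int.mul_ediv_cancel' hdvd1
      set E : Matrix (Fin (n + 2)) (Fin (n + 2)) ℤ :=
        Matrix.of fun i j =>
          if i = 0 then (if j = 0 then a else if j = (0 : Fin (n+1)).succ then b else 0)
          else if i = (0 : Fin (n+1)).succ then
            (if j = 0 then -q else if j = (0 : Fin (n+1)).succ then p else 0)
          else if j = i then 1 else 0 with hEdef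
      have hapbq : a * p + b * q = 1 := by
        apply mul_left_cancel₀ hG
        rw [mul_one]
        calc G * (a * p + b * q) = (G * p) * a + (G * q) * b := by ring
        _ = w0 * a + c' * b := by rw [hp, hq]
        _ = G := hbez.symm
      have e00 : E 0 0 = a := by simp [hEdef]
      have e01 : E 0 (1 : Fin (n+2)) = b := by
        simp [hEdef, Fin.succ_zero_eq_one]
      have e0ss : ∀ j : Fin n, E 0 j.succ.succ = 0 := by
        intro j
        simp [hEdef, Fin.succ_ne_zero, Fin.succ_zero_eq_one, fin_succ_succ_ne_one]
      have e10 : E (1 : Fin (n+2)) 0 = -q := by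
        simp [hEdef, Fin.succ_zero_eq_one]
      have e11 : E (1 : Fin (n+2)) (1 : Fin (n+2)) = p := by
        simp [hEdef, Fin.succ_zero_eq_one]
      have e1ss : ∀ j : Fin n, E (1 : Fin (n+2)) j.succ.succ = 0 := by
        intro j
        simp [hEdef, Fin.succ_ne_zero, Fin.succ_zero_eq_one, fin_succ_succ_ne_one]
      have ess0 : ∀ i : Fin n, E i.succ.succ 0 = 0 := by
        intro i
        simp [hEdef, Fin.succ_ne_zero, Fin.succ_zero_eq_one, fin_succ_succ_ne_one,
          (Fin.succ_ne_zero i.succ).symm]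
      have ess1 : ∀ i : Fin n, E i.succ.succ (1 : Fin (n+2)) = 0 := by
        intro i
        simp [hEdef, Fin.succ_ne_zero, Fin.succ_zero_eq_one, fin_succ_succ_ne_one,
          fin_one_ne_succ_succ]
      have essss : ∀ i j : Fin n, E i.succ.succ j.succ.succ = if j = i then 1 else 0 := by
        intro i j
        simp [hEdef, Fin.succ_ne_zero, Fin.succ_zero_eq_one, fin_succ_succ_ne_one,
          Fin.succ_inj]
      have hS0 : E.submatrix Fin.succ ((0 : Fin (n+2)).succAbove)
          = Matrix.diagonal (Fin.cons p fun _ => 1) := by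
        ext i j
        rw [Matrix.submatrix_apply, Fin.succAbove_zero]
        induction i using Fin.cases with
        | zero =>
          induction j using Fin.cases with
          | zero => simp [Fin.succ_zero_eq_one, e11]
          | succ j' => simp [Fin.succ_zero_eq_one, e1ss, (Fin.succ_ne_zero j').symm]
        | succ i' =>
          induction j using Fin.cases with
          | zero => simp [Fin.succ_zero_eq_one, ess1, Fin.succ_ne_zero]
          | succ j' =>
            rw [essss]
            simp [Matrix.diagonal_apply, Fin.succ_inj, eq_comm]
      have hS1 : E.submatrix Fin.succ (((0 : Fin (n+1)).succ).succAbove)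
          = Matrix.diagonal (Fin.cons (-q) fun _ => 1) := by
        ext i j
        rw [Matrix.submatrix_apply]
        induction j using Fin.cases with
        | zero =>
          rw [Fin.succ_succAbove_zero]
          induction i using Fin.cases with
          | zero => simp [Fin.succ_zero_eq_one, e10]
          | succ i' => simp [Fin.succ_zero_eq_one, ess0, Fin.succ_ne_zero]
        | succ j' =>
          rw [Fin.succ_succAbove_succ, Fin.succAbove_zero]
          induction i using Fin.cases with
          | zero => simp [e1ss, (Fin.succ_ne_zero j').symm]
          | succ i' =>
            rw [essss]
            simp [Matrix.diagonal_apply, Fin.succ_inj, eq_comm]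
      have hdetdiag : ∀ x : ℤ,
          (Matrix.diagonal (Fin.cons x fun _ : Fin n => (1:ℤ))).det = x := by
        intro x
        rw [Matrix.det_diagonal, Fin.prod_univ_succ]
        simp
      have hdetE : E.det = 1 := by
        rw [Matrix.det_succ_row_zero, Fin.sum_univ_succ, Fin.sum_univ_succ]
        simp only [e0ss, mul_zero, zero_mul, Finset.sum_const_zero, add_zero]
        rw [Fin.succ_zero_eq_one] at *
        rw [e00, e01, hS0, hS1, hdetdiag, hdetdiag]
        simp only [Fin.val_zero, pow_zero, one_mul, Fin.val_one, pow_one]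
        linarith [hapbq]
      have hEvec : E.mulVec (M.mulVec w) = Pi.single 0 G := by
        rw [hMvec]
        funext i
        have hsum : E.mulVec
            (fun j => if j = 0 then w0 else if j = (0 : Fin (n+1)).succ then c' else 0) i
            = E i 0 * w0 + E i (1 : Fin (n+2)) * c' := by
          simp only [Matrix.mulVec, dotProduct, Fin.sum_univ_succ]
          simp [Fin.succ_ne_zero, Fin.succ_zero_eq_one, fin_succ_succ_ne_one]
        rw [hsum]
        induction i using Fin.cases with
        | zero =>
          rw [e00, e01, Pi.single_eq_same]
          linarith [hbez]
        | succ i' =>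
          rw [Pi.single_eq_of_ne (Fin.succ_ne_zero i')]
          induction i' using Fin.cases with
          | zero =>
            rw [Fin.succ_zero_eq_one, e10, e11]
            apply mul_left_cancel₀ hG
            rw [mul_zero]
            calc G * (-q * w0 + p * c') = -((G * q) * w0) + (G * p) * c' := by ring
            _ = 0 := by rw [hp, hq]; ring
          | succ i'' =>
            rw [ess0, ess1]; ring
      refine ⟨E * M, G, ?_, ?_⟩
      · rw [Matrix.det_mul, hdetE, hMdet, one_mul]; exact hB'
      · rw [← Matrix.mulVec_mulVec, hEvec]

theorem stmt_4 (d : ℕ) (v : Fin (d + 1) → ℕ) (hv : ∀ i, 0 < v i)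
    (hgcd : Finset.univ.gcd v = 1) :
    ∃ u : Fin (d + 1) → Fin d → ℤ,
      (∀ i : Fin (d + 1), (Matrix.of fun r c => u (i.succAbove c) r).det ≠ 0) ∧
      (∀ i : Fin (d + 1),
        (Matrix.of fun r c => u (i.succAbove c) r).det.natAbs = v i) := by
  obtain ⟨B, c, hB, hred⟩ := exists_unimodular_reduce d (fun i => (v i : ℤ))
  have hdetB : B.det.natAbs = 1 := by
    rcases Int.isUnit_iff.mp hB with h | h <;> simp [h]
  have key : ∀ i, (B.adjugate i 0) * c = B.det * (v i : ℤ) := by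
    intro i
    have h1 : B.adjugate *ᵥ (B *ᵥ (fun i => (v i : ℤ)))
        = B.adjugate *ᵥ Pi.single 0 c := by rw [hred]
    rw [Matrix.mulVec_mulVec, Matrix.adjugate_mul, Matrix.mulVec_single,
      Matrix.smul_mulVec, Matrix.one_mulVec] at h1
    have h2 := congrFun h1 i
    simp only [Pi.smul_apply, smul_eq_mul, op_smul_eq_mul, Matrix.col_apply] at h2
    linarith [h2]
  have keyabs : ∀ i, (B.adjugate i 0).natAbs * c.natAbs = v i := by
    intro i
    have h3 := congrArg Int.natAbs (key i)
    rwa [Int.natAbs_mul, Int.natAbs_mul, hdetB, one_mul, Int.natAbs_natCast] at h3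
  have hc : c.natAbs = 1 := by
    have hdvd : c.natAbs ∣ Finset.univ.gcd v :=
      Finset.dvd_gcd fun i _ => ⟨(B.adjugate i 0).natAbs, by rw [← keyabs i]; ring⟩
    rw [hgcd] at hdvd
    exact Nat.dvd_one.mp hdvd
  have hadj : ∀ i, (B.adjugate i 0).natAbs = v i := by
    intro i
    have h4 := keyabs i
    rwa [hc, mul_one] at h4
  have main : ∀ i : Fin (d + 1),
      (Matrix.of fun (r : Fin d) (c' : Fin d) => B (Fin.succ r) (i.succAbove c')).det.natAbs
        = v i := by
    intro i
    have h := hadj i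
    rw [Matrix.adjugate_fin_succ_eq_det_submatrix] at h
    have heq : (Matrix.of fun (r : Fin d) (c' : Fin d) => B (Fin.succ r) (i.succAbove c'))
        = B.submatrix (Fin.succAbove 0) i.succAbove := by
      ext r c'; simp [Fin.succAbove_zero]
    rw [heq]
    rw [Int.natAbs_mul, Int.natAbs_pow] at h
    simpa using h
  refine ⟨fun j r => B r.succ j, ?_, fun i => main i⟩
  intro i h0
  have h := main i
  rw [show (Matrix.of fun (r : Fin d) (c' : Fin d) => B (Fin.succ r) (i.succAbove c')).det = 0
    from h0] at h
  exact (hv i).ne' (by simpa using h.symm)
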